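/- Let θ > 0 and f(x) = exp(-(1+x²)^{1/(2θ)}) for x ∈ ℝ. Then there exists C ≥ 1 such that for all k ∈ ℕ and x ∈ ℝ, |f^{(k)}(x)| ≤ C^k k! f(x) (1+x²)^{k·max(1/θ - 1, 0)/2}. -/

import Mathlib

set_option maxHeartbeats 1000000

open Complex Metric Set

noncomputable section

lemma cauchy_iter_bound {f : ℂ → ℂ} {c : ℂ} {R : NNReal} {M : ℝ} (hR : 0 < R)
    (hf : DifferentiableOn ℂ f (closedBall c R))
    (hM : ∀ z ∈ sphere c (R : ℝ), ‖f z‖ ≤ M) (n : ℕ) :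
    ‖iteratedDeriv n f c‖ ≤ n.factorial * M / (R : ℝ) ^ n := by
  have hRpos : (0:ℝ) < R := hR
  have h := hf.hasFPowerSeriesOnBall hR
  have hco : ContinuousOn (fun θ : ℝ => ‖f (circleMap c R θ)‖) (Set.uIcc 0 (2 * Real.pi)) := by
    apply ContinuousOn.norm
    exact hf.continuousOn.comp (continuous_circleMap c R).continuousOn
      (fun θ _ => sphere_subset_closedBall (circleMap_mem_sphere c R.coe_nonneg θ))
  have hint : (∫ θ : ℝ in (0)..2 * Real.pi, ‖f (circleMap c R θ)‖) ≤ 2 * Real.pi * M := by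
    have : (∫ θ : ℝ in (0)..2 * Real.pi, ‖f (circleMap c R θ)‖)
        ≤ ∫ _ : ℝ in (0)..2 * Real.pi, M := by
      apply intervalIntegral.integral_mono_on Real.two_pi_pos.le
        (hco.intervalIntegrable) intervalIntegrable_const
      intro θ _
      exact hM _ (circleMap_mem_sphere c R.coe_nonneg θ)
    simpa [mul_comm] using this
  have hM0 : 0 ≤ M := le_trans (norm_nonneg _) (hM _ (circleMap_mem_sphere c R.coe_nonneg 0))
  have hcoef : ‖cauchyPowerSeries f c R n‖ ≤ M / (R:ℝ) ^ n := by
    refine (norm_cauchyPowerSeries_le f c R n).trans ?_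
    rw [div_eq_mul_inv, ← inv_pow, _root_.abs_of_nonneg R.coe_nonneg]
    gcongr
    calc (2 * Real.pi)⁻¹ * ∫ θ : ℝ in (0)..2 * Real.pi, ‖f (circleMap c R θ)‖
        ≤ (2 * Real.pi)⁻¹ * (2 * Real.pi * M) := by
          gcongr
        _ = M := by field_simp
  have heq : iteratedDeriv n f c = n.factorial • (cauchyPowerSeries f c R n fun _ => 1) := by
    rw [iteratedDeriv_eq_iteratedFDeriv, ← h.factorial_smul 1 n]
  rw [heq, ← Nat.cast_smul_eq_nsmul ℂ, norm_smul]
  have happ : ‖cauchyPowerSeries f c R n fun _ => (1:ℂ)‖ ≤ M / (R:ℝ) ^ n := by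
    refine le_trans ((cauchyPowerSeries f c R n).le_opNorm _) ?_
    simpa using hcoef
  calc ‖(n.factorial : ℂ)‖ * ‖cauchyPowerSeries f c R n fun _ => (1:ℂ)‖
      ≤ n.factorial * (M / (R:ℝ) ^ n) := by
        rw [show ‖(n.factorial : ℂ)‖ = (n.factorial : ℝ) by simp]
        gcongr
      _ = n.factorial * M / (R:ℝ) ^ n := by ring


noncomputable section

variable (s : ℝ)

def Strip : Set ℂ := {z : ℂ | z.im ^ 2 < 1}

def Fc (s : ℝ) : ℂ → ℂ := fun z => Complex.exp (-((1 + z ^ 2) ^ (s : ℂ)))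

lemma isOpen_strip : IsOpen Strip := by
  have : Strip = {z : ℂ | -1 < z.im} ∩ {z : ℂ | z.im < 1} := by
    ext z
    simp only [Strip, mem_setOf_eq, mem_inter_iff]
    constructor
    · intro h
      constructor <;> nlinarith [sq_nonneg (z.im + 1), sq_nonneg (z.im - 1)]
    · rintro ⟨h1, h2⟩; nlinarith
  rw [this]
  exact (isOpen_lt continuous_const Complex.continuous_im).inter
    (isOpen_lt Complex.continuous_im continuous_const)

lemma one_add_sq_mem_slitPlane {z : ℂ} (hz : z ∈ Strip) : (1 + z ^ 2) ∈ Complex.slitPlane := by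
  rw [Complex.mem_slitPlane_iff]
  have hre : (1 + z ^ 2).re = 1 + z.re ^ 2 - z.im ^ 2 := by
    simp [Complex.add_re, pow_two, Complex.mul_re]; ring
  have him : (1 + z ^ 2).im = 2 * z.re * z.im := by
    simp [Complex.add_im, pow_two, Complex.mul_im]; ring
  rcases eq_or_ne (z.re * z.im) 0 with h | h
  · left
    rw [hre]
    rcases mul_eq_zero.mp h with h0 | h0 <;>
      · rw [h0] <;> simp only [Strip, mem_setOf_eq] at hz <;> nlinarith [sq_nonneg z.re, sq_nonneg z.im, hz]
  · right
    rw [him]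
    intro hc
    exact h (by linarith [mul_eq_zero.mp (by linarith [hc] : (2 : ℝ) * (z.re * z.im) = 0)])

lemma Fc_differentiableAt {z : ℂ} (hz : z ∈ Strip) : DifferentiableAt ℂ (Fc s) z := by
  have h1 : DifferentiableAt ℂ (fun z : ℂ => 1 + z ^ 2) z :=
    (differentiableAt_id.pow 2).const_add 1
  exact (((h1.hasDerivAt.cpow_const (one_add_sq_mem_slitPlane hz)).differentiableAt).neg).cexp

lemma Fc_analytic : AnalyticOnNhd ℂ (Fc s) Strip :=
  DifferentiableOn.analyticOnNhd (fun z hz => (Fc_differentiableAt s hz).differentiableWithinAt)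
    isOpen_strip

lemma iteratedDeriv_Fc_analytic (k : ℕ) : AnalyticOnNhd ℂ (iteratedDeriv k (Fc s)) Strip := by
  induction k with
  | zero => simpa [iteratedDeriv_zero] using Fc_analytic s
  | succ n ih => rw [iteratedDeriv_succ]; exact ih.deriv

lemma ofReal_mem_strip (x : ℝ) : (x : ℂ) ∈ Strip := by
  simp [Strip]

lemma Fc_ofReal (x : ℝ) : Fc s x = ((Real.exp (-((1 + x ^ 2) ^ s)) : ℝ) : ℂ) := by
  have h1 : ((1 : ℂ) + (x : ℂ) ^ 2) = (((1 + x ^ 2 : ℝ)) : ℂ) := by push_cast; ring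
  have h2 : (((1 + x ^ 2 : ℝ)) : ℂ) ^ (s : ℂ) = (((1 + x ^ 2) ^ s : ℝ) : ℂ) :=
    (Complex.ofReal_cpow (by positivity : (0:ℝ) ≤ 1 + x ^ 2) s).symm
  rw [Fc, h1, h2, ← Complex.ofReal_neg, Complex.ofReal_exp]

lemma iteratedDeriv_real_eq (k : ℕ) (x : ℝ) :
    iteratedDeriv k (fun y : ℝ => Real.exp (-((1 + y ^ 2) ^ s))) x
      = (iteratedDeriv k (Fc s) x).re := by
  induction k generalizing x with
  | zero =>
    simp only [iteratedDeriv_zero, Fc_ofReal, Complex.ofReal_re]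
  | succ n ih =>
    rw [iteratedDeriv_succ, iteratedDeriv_succ]
    have hfun : iteratedDeriv n (fun y : ℝ => Real.exp (-((1 + y ^ 2) ^ s)))
        = fun y : ℝ => (iteratedDeriv n (Fc s) y).re := funext fun y => ih y
    rw [hfun]
    have hda : HasDerivAt (iteratedDeriv n (Fc s)) (deriv (iteratedDeriv n (Fc s)) (x : ℂ)) (x : ℂ) :=
      ((iteratedDeriv_Fc_analytic s n (x : ℂ) (ofReal_mem_strip x)).differentiableAt).hasDerivAt
    exact hda.real_of_complex.deriv



lemma rpow_interval_bound {s L t : ℝ} (hL : 1 ≤ L) (h1 : 5 / 8 * L ≤ t) (h2 : t ≤ 2 * L) :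
    t ^ (s - 1) ≤ (2 : ℝ) ^ |s - 1| * L ^ (s - 1) := by
  have hL0 : (0:ℝ) < L := by linarith
  have ht0 : (0:ℝ) < t := by linarith
  rcases le_total 1 s with hs | hs
  · have habs : |s - 1| = s - 1 := abs_of_nonneg (by linarith)
    calc t ^ (s - 1) ≤ (2 * L) ^ (s - 1) := Real.rpow_le_rpow ht0.le h2 (by linarith)
      _ = 2 ^ (s - 1) * L ^ (s - 1) := Real.mul_rpow (by norm_num) hL0.le
      _ = (2 : ℝ) ^ |s - 1| * L ^ (s - 1) := by rw [habs]
  · have habs : |s - 1| = 1 - s := by rw [abs_of_nonpos (by linarith)]; ring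
    have h58 : (0:ℝ) < 5 / 8 * L := by linarith
    calc t ^ (s - 1) ≤ (5 / 8 * L) ^ (s - 1) :=
          Real.rpow_le_rpow_of_nonpos h58 h1 (by linarith)
      _ = (5 / 8 : ℝ) ^ (s - 1) * L ^ (s - 1) := Real.mul_rpow (by norm_num) hL0.le
      _ ≤ (2 : ℝ) ^ |s - 1| * L ^ (s - 1) := by
          apply mul_le_mul_of_nonneg_right _ (Real.rpow_pos_of_pos hL0 _).le
          rw [habs]
          have he : (8 / 5 : ℝ) ^ (1 - s) = (5 / 8 : ℝ) ^ (s - 1) := by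
            rw [show (8 / 5 : ℝ) = (5 / 8 : ℝ)⁻¹ by norm_num,
              Real.inv_rpow (by norm_num : (0:ℝ) ≤ 5 / 8),
              ← Real.rpow_neg (by norm_num : (0:ℝ) ≤ 5 / 8)]
            ring_nf
          rw [← he]
          exact Real.rpow_le_rpow (by norm_num) (by norm_num) (by linarith)

lemma Fc_sup_bound {s m : ℝ} (hs : 0 < s) (hm0 : 0 ≤ m) (hm : 2 * s - 1 ≤ m) (x : ℝ) {z : ℂ}
    (hz : dist z (x : ℂ) ≤ 1 / 8 * (1 + x ^ 2) ^ (-(m / 2))) :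
    ‖Fc s z‖ ≤ Real.exp (3 / 8 * s * (2 : ℝ) ^ |s - 1|)
      * Real.exp (-((1 + x ^ 2) ^ s)) := by
  set L : ℝ := 1 + x ^ 2 with hLdef
  have hL1 : 1 ≤ L := by nlinarith [sq_nonneg x]
  have hL0 : (0:ℝ) < L := by linarith
  set K : ℝ := (2 : ℝ) ^ |s - 1| with hKdef
  have hK0 : 0 < K := Real.rpow_pos_of_pos (by norm_num) _
  set R : ℝ := 1 / 8 * L ^ (-(m / 2)) with hRdef
  have hRpos : 0 < R := by positivity
  have hR8 : R ≤ 1 / 8 := by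
    have := Real.rpow_le_one_of_one_le_of_nonpos hL1 (by linarith : -(m / 2) ≤ 0)
    rw [hRdef]; linarith
  set w : ℂ := 1 + z ^ 2 with hwdef
  set w0 : ℂ := ((L : ℝ) : ℂ) with hw0def
  have hw0 : w0 = 1 + (x : ℂ) ^ 2 := by rw [hw0def]; push_cast [hLdef]; ring
  have hsqx : |x| ≤ Real.sqrt L := by
    rw [← Real.sqrt_sq_eq_abs]
    exact Real.sqrt_le_sqrt (by nlinarith)
  have hsq1 : 1 ≤ Real.sqrt L := by
    rw [show (1:ℝ) = Real.sqrt 1 by simp]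
    exact Real.sqrt_le_sqrt hL1
  have hsqL : Real.sqrt L ≤ L := by
    nlinarith [Real.sq_sqrt hL0.le, Real.sqrt_nonneg L]
  -- bound on ‖w - w0‖
  have hzx : ‖z - (x:ℂ)‖ ≤ R := by rwa [← dist_eq_norm]
  have hD : ‖w - w0‖ ≤ 3 * Real.sqrt L * R := by
    have hfac : w - w0 = (z - (x:ℂ)) * (z + (x:ℂ)) := by rw [hwdef, hw0]; ring
    rw [hfac, norm_mul]
    have h2 : ‖z + (x:ℂ)‖ ≤ R + 2 * Real.sqrt L := by
      calc ‖z + (x:ℂ)‖ = ‖(z - (x:ℂ)) + (2 * x : ℝ)‖ := by push_cast; ring_nf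
        _ ≤ ‖z - (x:ℂ)‖ + ‖((2 * x : ℝ) : ℂ)‖ := norm_add_le _ _
        _ ≤ R + 2 * Real.sqrt L := by
            rw [Complex.norm_real]
            have : |2 * x| = 2 * |x| := by rw [abs_mul]; norm_num
            rw [Real.norm_eq_abs, this]
            gcongr
    calc ‖z - (x:ℂ)‖ * ‖z + (x:ℂ)‖ ≤ R * (R + 2 * Real.sqrt L) := by
          gcongr
      _ ≤ R * (3 * Real.sqrt L) := by nlinarith
      _ = 3 * Real.sqrt L * R := by ring
  have hDL : ‖w - w0‖ ≤ 3 / 8 * L := by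
    refine hD.trans ?_
    have h1 : Real.sqrt L * R ≤ Real.sqrt L * (1/8) := by
      have := Real.sqrt_nonneg L; nlinarith
    nlinarith
  -- key smallness: ‖w - w0‖ * L ^ (s - 1) ≤ 3/8
  have hDsmall : ‖w - w0‖ * L ^ (s - 1) ≤ 3 / 8 := by
    have hexp : Real.sqrt L * R * L ^ (s - 1) = 1/8 * L ^ (1/2 + -(m/2) + (s-1)) := by
      rw [Real.sqrt_eq_rpow, hRdef, Real.rpow_add hL0, Real.rpow_add hL0]
      ring
    have hle1 : L ^ (1/2 + -(m/2) + (s-1)) ≤ 1 :=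
      Real.rpow_le_one_of_one_le_of_nonpos hL1 (by linarith)
    have h3 : ‖w - w0‖ * L ^ (s - 1) ≤ 3 * (Real.sqrt L * R * L ^ (s - 1)) := by
      have hrp : (0:ℝ) ≤ L ^ (s - 1) := (Real.rpow_pos_of_pos hL0 _).le
      have := hD
      nlinarith [norm_nonneg (w - w0)]
    rw [hexp] at h3
    nlinarith
  -- MVT on the convex set U
  set U : Set ℂ := {ζ : ℂ | 5 / 8 * L ≤ ζ.re} ∩ closedBall 0 (2 * L) with hUdef
  have hconv : Convex ℝ U := (convex_halfSpace_re_ge _).inter (convex_closedBall _ _)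
  have hw0U : w0 ∈ U := by
    constructor
    · show 5 / 8 * L ≤ w0.re
      rw [hw0def]; simp; linarith
    · simp only [mem_closedBall, dist_zero_right, hw0def, Complex.norm_real, Real.norm_eq_abs,
        abs_of_pos hL0]
      linarith
  have hwre : 5 / 8 * L ≤ w.re := by
    have h1 : (w0 - w).re ≤ ‖w0 - w‖ := Complex.re_le_norm _
    have h2 : ‖w0 - w‖ = ‖w - w0‖ := by rw [norm_sub_rev]
    have h3 : w0.re = L := by rw [hw0def]; simp
    have : w0.re - w.re ≤ 3 / 8 * L := by
      rw [show w0.re - w.re = (w0 - w).re by simp [Complex.sub_re]]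
      exact h1.trans (by rw [h2]; exact hDL)
    linarith
  have hwU : w ∈ U := by
    constructor
    · exact hwre
    · simp only [mem_closedBall, dist_zero_right]
      calc ‖w‖ = ‖w0 + (w - w0)‖ := by ring_nf
        _ ≤ ‖w0‖ + ‖w - w0‖ := norm_add_le _ _
        _ ≤ L + 3 / 8 * L := by
            rw [hw0def, Complex.norm_real, Real.norm_eq_abs, abs_of_pos hL0]
            gcongr
        _ ≤ 2 * L := by linarith
  -- derivative bound on U
  have hderiv : ∀ ζ ∈ U, HasDerivWithinAt (fun u : ℂ => u ^ (s : ℂ))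
      ((s : ℂ) * ζ ^ ((s : ℂ) - 1) * 1) U ζ := by
    intro ζ hζ
    have hslit : ζ ∈ Complex.slitPlane := Or.inl (by
      have := hζ.1; simp only [mem_setOf_eq] at this; linarith)
    exact ((hasDerivAt_id ζ).cpow_const hslit).hasDerivWithinAt
  have hbound : ∀ ζ ∈ U, ‖(s : ℂ) * ζ ^ ((s : ℂ) - 1) * 1‖ ≤ s * (K * L ^ (s - 1)) := by
    intro ζ hζ
    have hζre : 5 / 8 * L ≤ ζ.re := hζ.1
    have hζne : ζ ≠ 0 := by
      intro h; rw [h] at hζre; simp at hζre; nlinarith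
    have habs1 : 5 / 8 * L ≤ ‖ζ‖ := le_trans hζre (Complex.re_le_norm ζ)
    have habs2 : ‖ζ‖ ≤ 2 * L := by
      have := hζ.2; simpa [Complex.dist_eq] using this
    have hcast : ((s : ℂ) - 1) = (((s - 1 : ℝ)) : ℂ) := by push_cast; ring
    rw [mul_one, norm_mul, hcast]
    have hnorm : ‖ζ ^ (((s - 1 : ℝ)) : ℂ)‖ = ‖ζ‖ ^ (s - 1) := by
      rw [Complex.norm_cpow_of_ne_zero hζne]
      simp [Complex.ofReal_re, Complex.ofReal_im]
    rw [hnorm]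
    have : ‖ζ‖ ^ (s - 1) ≤ K * L ^ (s - 1) :=
      rpow_interval_bound hL1 habs1 habs2
    calc ‖(s : ℂ)‖ * ‖ζ‖ ^ (s - 1) = s * ‖ζ‖ ^ (s - 1) := by
          rw [Complex.norm_real, Real.norm_eq_abs, abs_of_pos hs]
      _ ≤ s * (K * L ^ (s - 1)) := by gcongr
  have hMVT := hconv.norm_image_sub_le_of_norm_hasDerivWithin_le hderiv hbound hw0U hwU
  -- hMVT : ‖w ^ s - w0 ^ s‖ ≤ s * (K * L ^ (s - 1)) * ‖w - w0‖
  have hA : ‖w ^ (s:ℂ) - w0 ^ (s:ℂ)‖ ≤ 3 / 8 * s * K := by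
    refine hMVT.trans ?_
    calc s * (K * L ^ (s - 1)) * ‖w - w0‖ = s * K * (‖w - w0‖ * L ^ (s - 1)) := by ring
      _ ≤ s * K * (3 / 8) := by
          have hsk : 0 ≤ s * K := by positivity
          nlinarith [hDsmall]
      _ = 3 / 8 * s * K := by ring
  -- conclude
  have hw0s : w0 ^ (s : ℂ) = ((L ^ s : ℝ) : ℂ) := (Complex.ofReal_cpow hL0.le s).symm
  have hres : L ^ s - 3 / 8 * s * K ≤ (w ^ (s:ℂ)).re := by
    have h1 : (w0 ^ (s:ℂ) - w ^ (s:ℂ)).re ≤ ‖w0 ^ (s:ℂ) - w ^ (s:ℂ)‖ := Complex.re_le_norm _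
    rw [norm_sub_rev] at h1
    have h2 : (w0 ^ (s:ℂ)).re = L ^ s := by rw [hw0s]; simp
    have h3 : (w0 ^ (s:ℂ) - w ^ (s:ℂ)).re = L ^ s - (w ^ (s:ℂ)).re := by
      rw [Complex.sub_re, h2]
    linarith [hA.trans_eq' rfl, h1.trans hA]
  have hnorm : ‖Fc s z‖ = Real.exp (-(w ^ (s:ℂ)).re) := by
    rw [Fc, Complex.norm_exp]
    congr 1
  rw [hnorm, ← Real.exp_add]
  apply Real.exp_le_exp.mpr
  linarith



theorem GS_function_derivative_bound (θ : ℝ) (hθ : 0 < θ) :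
    ∃ C : ℝ, 1 ≤ C ∧
      ∀ (k : ℕ) (x : ℝ),
        |iteratedDeriv k (fun y : ℝ => Real.exp (-((1 + y ^ 2) ^ (1 / (2 * θ))))) x|
          ≤ C ^ k * (Nat.factorial k : ℝ) * Real.exp (-((1 + x ^ 2) ^ (1 / (2 * θ))))
              * (1 + x ^ 2) ^ ((k : ℝ) * max (1 / θ - 1) 0 / 2) := by
  set s : ℝ := 1 / (2 * θ) with hsdef
  have hs : 0 < s := by rw [hsdef]; positivity
  set m : ℝ := max (1 / θ - 1) 0 with hmdef
  have hm0 : 0 ≤ m := le_max_right _ _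
  have hm : 2 * s - 1 ≤ m := by
    have h2s : 2 * s = 1 / θ := by rw [hsdef]; field_simp
    have := le_max_left (1 / θ - 1) (0:ℝ)
    rw [hmdef]; linarith
  set A : ℝ := 3 / 8 * s * (2 : ℝ) ^ |s - 1| with hAdef
  have hA0 : 0 ≤ A := by rw [hAdef]; positivity
  have hexpA1 : 1 ≤ Real.exp A := Real.one_le_exp hA0
  refine ⟨8 * Real.exp A, by nlinarith, ?_⟩
  intro k x
  set L : ℝ := 1 + x ^ 2 with hLdef
  have hL1 : 1 ≤ L := by nlinarith [sq_nonneg x]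
  have hL0 : (0:ℝ) < L := by linarith
  rcases Nat.eq_zero_or_pos k with rfl | hk
  · simp only [iteratedDeriv_zero, pow_zero, Nat.factorial_zero, Nat.cast_one, Nat.cast_zero,
      zero_mul, zero_div, Real.rpow_zero, one_mul, mul_one]
    rw [abs_of_pos (Real.exp_pos _)]
  · -- main case k ≥ 1
    set R : ℝ := 1 / 8 * L ^ (-(m / 2)) with hRdef
    have hRpos : 0 < R := by rw [hRdef]; positivity
    have hR8 : R ≤ 1 / 8 := by
      have := Real.rpow_le_one_of_one_le_of_nonpos hL1 (by linarith : -(m / 2) ≤ 0)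
      rw [hRdef]; linarith
    set Rnn : NNReal := ⟨R, hRpos.le⟩ with hRnn
    have hRnnpos : 0 < Rnn := hRpos
    have hRcoe : (Rnn : ℝ) = R := rfl
    have hsubset : closedBall ((x : ℝ) : ℂ) (Rnn : ℝ) ⊆ Strip := by
      intro z hz
      simp only [mem_closedBall, Complex.dist_eq] at hz
      have him : |z.im| ≤ R := by
        have h1 : |(z - (x:ℂ)).im| ≤ ‖z - (x:ℂ)‖ := Complex.abs_im_le_norm _
        have h2 : (z - (x:ℂ)).im = z.im := by simp
        rw [h2] at h1
        exact h1.trans (by rw [hRcoe] at hz; exact hz)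
      simp only [Strip, mem_setOf_eq]
      nlinarith [abs_nonneg z.im, _root_.sq_abs z.im]
    have hdiff : DifferentiableOn ℂ (Fc s) (closedBall ((x : ℝ) : ℂ) (Rnn : ℝ)) :=
      fun z hz => (Fc_differentiableAt s (hsubset hz)).differentiableWithinAt
    have hsup : ∀ z ∈ sphere ((x : ℝ) : ℂ) (Rnn : ℝ),
        ‖Fc s z‖ ≤ Real.exp A * Real.exp (-(L ^ s)) := by
      intro z hz
      have hdz : dist z ((x:ℝ):ℂ) ≤ 1 / 8 * (1 + x ^ 2) ^ (-(m / 2)) := by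
        rw [mem_sphere] at hz
        rw [hz, hRcoe, hRdef, hLdef]
      exact Fc_sup_bound hs hm0 hm x hdz
    have hC := cauchy_iter_bound hRnnpos hdiff hsup k
    -- pass to the real function
    have hre := iteratedDeriv_real_eq s k x
    have hlhs : |iteratedDeriv k (fun y : ℝ => Real.exp (-((1 + y ^ 2) ^ s))) x|
        ≤ (k.factorial : ℝ) * (Real.exp A * Real.exp (-(L ^ s))) / R ^ k := by
      rw [hre]
      have hC' : ‖iteratedDeriv k (Fc s) ((x:ℝ):ℂ)‖
          ≤ (k.factorial : ℝ) * (Real.exp A * Real.exp (-(L ^ s))) / R ^ k := hC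
      refine le_trans ?_ hC'
      exact Complex.abs_re_le_norm _
    refine hlhs.trans ?_
    -- algebra
    set e : ℝ := (k : ℝ) * m / 2 with hedef
    have hRk : R ^ k = (1/8 : ℝ) ^ k * L ^ (-e) := by
      rw [hRdef, mul_pow, ← Real.rpow_natCast (L ^ (-(m/2))) k, ← Real.rpow_mul hL0.le]
      congr 1
      rw [hedef]; ring
    have hinv : R ^ k * ((8:ℝ) ^ k * L ^ e) = 1 := by
      rw [hRk]
      have h8 : (1/8:ℝ) ^ k * (8:ℝ) ^ k = 1 := by rw [← mul_pow]; norm_num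
      have hLe : L ^ (-e) * L ^ e = 1 := by
        rw [← Real.rpow_add hL0, neg_add_cancel, Real.rpow_zero]
      calc (1/8:ℝ) ^ k * L ^ (-e) * ((8:ℝ) ^ k * L ^ e)
          = ((1/8:ℝ) ^ k * (8:ℝ) ^ k) * (L ^ (-e) * L ^ e) := by ring
        _ = 1 := by rw [h8, hLe, mul_one]
    have hfrac : (k.factorial : ℝ) * (Real.exp A * Real.exp (-(L ^ s))) / R ^ k
        = (k.factorial : ℝ) * (Real.exp A * Real.exp (-(L ^ s))) * ((8:ℝ) ^ k * L ^ e) := by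
      rw [eq_comm, eq_div_iff (pow_pos hRpos k).ne']
      calc (k.factorial : ℝ) * (Real.exp A * Real.exp (-(L ^ s))) * ((8:ℝ) ^ k * L ^ e) * R ^ k
          = (k.factorial : ℝ) * (Real.exp A * Real.exp (-(L ^ s)))
            * (R ^ k * ((8:ℝ) ^ k * L ^ e)) := by ring
        _ = (k.factorial : ℝ) * (Real.exp A * Real.exp (-(L ^ s))) := by rw [hinv, mul_one]
    rw [hfrac]
    have hsp : Real.exp A ≤ (Real.exp A) ^ k := le_self_pow₀ hexpA1 hk.ne'
    calc (k.factorial : ℝ) * (Real.exp A * Real.exp (-(L ^ s))) * ((8:ℝ) ^ k * L ^ e)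
        = ((8:ℝ) ^ k * (k.factorial : ℝ) * Real.exp (-(L ^ s)) * L ^ e) * Real.exp A := by ring
      _ ≤ ((8:ℝ) ^ k * (k.factorial : ℝ) * Real.exp (-(L ^ s)) * L ^ e) * (Real.exp A) ^ k := by
          apply mul_le_mul_of_nonneg_left hsp
          positivity
      _ = (8 * Real.exp A) ^ k * (k.factorial : ℝ) * Real.exp (-(L ^ s)) * L ^ e := by
          rw [mul_pow]; ring

end
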